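/- arXiv:1811.04841 — 7 statements merged into one kernel-verified Lean document; each statement's English description precedes it below -/
import Mathlib

section
/- Let X be a compact metric space and f : X → X a continuous map. If the map ω_f : x ↦ ω(x,f) is continuous (Hausdorff metric) and closure(Per(f)) = ⋂_{n∈ℕ} f^n(X), then ω(x,f) = Ω(x,f) for every x ∈ X. -/
open Filter Topology Set

/-- The omega-limit set ω(x,f): points y with f^[nᵢ] x → y for some strictly
increasing sequence (nᵢ). -/
def omegaLimitPts {X : Type*} [TopologicalSpace X] (f : X → X) (x : X) : Set X :=
  {y | ∃ n : ℕ → ℕ, StrictMono n ∧ Tendsto (fun i => f^[n i] x) atTop (𝓝 y)}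

/-- The prolongational limit set Ω(x,f): points y with f^[nᵢ] xᵢ → y for some
sequence xᵢ → x and strictly increasing (nᵢ). -/
def prolongPts {X : Type*} [TopologicalSpace X] (f : X → X) (x : X) : Set X :=
  {y | ∃ (xs : ℕ → X) (n : ℕ → ℕ), StrictMono n ∧ Tendsto xs atTop (𝓝 x) ∧
        Tendsto (fun i => f^[n i] (xs i)) atTop (𝓝 y)}

/-- f is equicontinuous: the family of iterates {fⁿ} is (uniformly) equicontinuous. -/
def EquicontinuousMap {X : Type*} [MetricSpace X] (f : X → X) : Prop :=
  ∀ ε > (0:ℝ), ∃ δ > (0:ℝ), ∀ x y : X, dist x y < δ → ∀ n : ℕ,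
    dist (f^[n] x) (f^[n] y) < ε

/-- Continuity of the map ω_f : x ↦ ω(x,f) with respect to the Hausdorff metric. -/
def OmegaMapContinuous {X : Type*} [MetricSpace X] (f : X → X) : Prop :=
  ∀ x₀ : X, ∀ ε > (0:ℝ), ∃ δ > (0:ℝ), ∀ x : X, dist x x₀ < δ →
    Metric.hausdorffDist (omegaLimitPts f x) (omegaLimitPts f x₀) < ε

/-- p is an end point: every open set containing p contains an open set V ∋ p
whose boundary is a single point. -/
def IsEndpoint {X : Type*} [TopologicalSpace X] (p : X) : Prop :=
  ∀ U : Set X, IsOpen U → p ∈ U →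
    ∃ V : Set X, IsOpen V ∧ p ∈ V ∧ V ⊆ U ∧ ∃ b : X, frontier V = {b}

/-- X contains no simple closed curve: no subspace homeomorphic to the circle. -/
def NoSimpleClosedCurve (X : Type*) [TopologicalSpace X] : Prop :=
  ∀ s : Set X, ¬ Nonempty (s ≃ₜ Circle)

lemma omega_nonempty' {X : Type*} [MetricSpace X] [CompactSpace X] (f : X → X) (x : X) :
    (omegaLimitPts f x).Nonempty := by
  obtain ⟨a, -, φ, hφ, ha⟩ :=
    isCompact_univ.tendsto_subseq (x := fun n => f^[n] x) (fun n => mem_univ _)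
  exact ⟨a, φ, hφ, ha⟩

lemma omega_iterate' {X : Type*} [TopologicalSpace X] (f : X → X) (x : X) (k : ℕ) :
    omegaLimitPts f (f^[k] x) = omegaLimitPts f x := by
  ext y
  constructor
  · rintro ⟨n, hn, hy⟩
    refine ⟨fun i => n i + k, fun a b hab => by have := hn hab; simp only []; omega,
      hy.congr fun i => (Function.iterate_add_apply f (n i) k x).symm⟩
  · rintro ⟨n, hn, hy⟩
    have hk : ∀ i : ℕ, k ≤ n (i + k) := fun i =>
      le_trans (Nat.le_add_left k i) hn.le_apply
    refine ⟨fun i => n (i + k) - k, ?_, ?_⟩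
    · intro a b hab
      have h1 := hn (show a + k < b + k by omega)
      have h2 := hk a
      simp only []
      omega
    · have heq : ∀ i, f^[n (i + k) - k] (f^[k] x) = f^[n (i + k)] x := by
        intro i
        rw [← Function.iterate_add_apply, Nat.sub_add_cancel (hk i)]
      have ht : Tendsto (fun i => f^[n (i + k)] x) atTop (𝓝 y) :=
        hy.comp (tendsto_add_atTop_nat k)
      exact ht.congr fun i => (heq i).symm

lemma periodic_mem_omega' {X : Type*} [TopologicalSpace X] (f : X → X) (p : X)
    (hp : p ∈ Function.periodicPts f) : p ∈ omegaLimitPts f p := by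
  obtain ⟨m, hm, hmp⟩ := hp
  refine ⟨fun i => m * (i + 1), ?_, ?_⟩
  · intro a b hab
    have h1 : a + 1 < b + 1 := by omega
    exact (mul_lt_mul_iff_right₀ hm).mpr h1
  · exact tendsto_const_nhds.congr fun i => (hmp.mul_const (i + 1)).symm

lemma mem_omega_of_approx' {X : Type*} [MetricSpace X] (f : X → X) (x y : X)
    (h : ∀ ε > (0:ℝ), ∀ N : ℕ, ∃ m, N ≤ m ∧ dist (f^[m] x) y < ε) :
    y ∈ omegaLimitPts f x := by
  have h' : ∀ k N : ℕ, ∃ m, N ≤ m ∧ dist (f^[m] x) y < 1 / (k + 1) := fun k N =>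
    h (1 / (k + 1)) (by positivity) N
  choose g hg1 hg2 using h'
  set n : ℕ → ℕ := fun k => Nat.rec (g 0 0) (fun k ih => g (k + 1) (ih + 1)) k with hn
  have hmono : StrictMono n := strictMono_nat_of_lt_succ fun k => by
    have h1 : n k + 1 ≤ n (k + 1) := hg1 (k + 1) (n k + 1)
    omega
  have hd : ∀ k, dist (f^[n k] x) y < 1 / (k + 1) := by
    intro k
    cases k with
    | zero => exact hg2 0 0
    | succ k => exact hg2 (k + 1) (n k + 1)
  refine ⟨n, hmono, Metric.tendsto_atTop.mpr fun ε hε => ?_⟩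
  obtain ⟨K, hK⟩ := exists_nat_one_div_lt hε
  refine ⟨K, fun k hk => ?_⟩
  have hle : (1:ℝ) / (k + 1) ≤ 1 / (K + 1) :=
    one_div_le_one_div_of_le (by positivity) (by exact_mod_cast Nat.succ_le_succ hk)
  exact ((hd k).trans_le hle).trans hK

/-- If ω_f is continuous and closure(Per(f)) = ⋂ₙ fⁿ(X), then ω(x,f) = Ω(x,f)
for every x. -/
theorem omega_eq_prolong_of_omegaMapContinuous {X : Type*} [MetricSpace X]
    [CompactSpace X] (f : X → X) (hf : Continuous f)
    (hω : OmegaMapContinuous f)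
    (hP : closure (Function.periodicPts f) = ⋂ n : ℕ, f^[n] '' Set.univ) :
    ∀ x : X, omegaLimitPts f x = prolongPts f x := by
  intro x
  apply Set.Subset.antisymm
  · rintro y ⟨n, hn, hy⟩
    exact ⟨fun _ => x, n, hn, tendsto_const_nhds, hy⟩
  · rintro y ⟨xs, n, hn, hxs, hfy⟩
    have hne : ∀ a b : X,
        EMetric.hausdorffEdist (omegaLimitPts f a) (omegaLimitPts f b) ≠ ⊤ := fun a b =>
      Metric.hausdorffEdist_ne_top_of_nonempty_of_bounded (omega_nonempty' f a)
        (omega_nonempty' f b) (isCompact_univ.isBounded.subset (subset_univ _))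
        (isCompact_univ.isBounded.subset (subset_univ _))
    have hyInt : y ∈ ⋂ k : ℕ, f^[k] '' Set.univ := by
      refine mem_iInter.mpr fun k => ?_
      have hcl : IsClosed (f^[k] '' Set.univ) :=
        (isCompact_univ.image (hf.iterate k)).isClosed
      refine hcl.mem_of_tendsto hfy (eventually_atTop.mpr ⟨k, fun i hi => ?_⟩)
      have hik : k ≤ n i := le_trans hi hn.le_apply
      refine ⟨f^[n i - k] (xs i), mem_univ _, ?_⟩
      rw [← Function.iterate_add_apply, Nat.add_sub_cancel' hik]
    have hyP : y ∈ closure (Function.periodicPts f) := hP ▸ hyInt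
    have key : ∀ ε > (0:ℝ), ∃ w ∈ omegaLimitPts f x, dist y w < ε := by
      intro ε hε
      obtain ⟨δ₁, hδ₁, H1⟩ := hω x (ε/8) (by positivity)
      obtain ⟨δ₂, hδ₂, H2⟩ := hω y (ε/8) (by positivity)
      obtain ⟨p, hpPer, hpy⟩ := Metric.mem_closure_iff.mp hyP (min δ₂ (ε/8)) (by positivity)
      obtain ⟨N1, hN1⟩ := Metric.tendsto_atTop.mp hxs δ₁ hδ₁
      obtain ⟨N2, hN2⟩ := Metric.tendsto_atTop.mp hfy δ₂ hδ₂
      set i := max N1 N2 with hi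
      have hxi : dist (xs i) x < δ₁ := hN1 i (le_max_left _ _)
      have hfi : dist (f^[n i] (xs i)) y < δ₂ := hN2 i (le_max_right _ _)
      have h1 : Metric.hausdorffDist (omegaLimitPts f (xs i)) (omegaLimitPts f x) < ε/8 :=
        H1 _ hxi
      have h2 : Metric.hausdorffDist (omegaLimitPts f (xs i)) (omegaLimitPts f y) < ε/8 := by
        have h := H2 _ hfi
        rwa [omega_iterate'] at h
      have h3 : Metric.hausdorffDist (omegaLimitPts f p) (omegaLimitPts f y) < ε/8 :=
        H2 p (by rw [dist_comm]; exact hpy.trans_le (min_le_left _ _))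
      have hpω : p ∈ omegaLimitPts f p := periodic_mem_omega' f p hpPer
      obtain ⟨q, hq, hpq⟩ := Metric.exists_dist_lt_of_hausdorffDist_lt hpω h3 (hne p y)
      rw [Metric.hausdorffDist_comm] at h2
      obtain ⟨r, hr, hqr⟩ := Metric.exists_dist_lt_of_hausdorffDist_lt hq h2 (hne y (xs i))
      obtain ⟨w, hw, hrw⟩ := Metric.exists_dist_lt_of_hausdorffDist_lt hr h1 (hne (xs i) x)
      refine ⟨w, hw, ?_⟩
      have hyp : dist y p < ε/8 := hpy.trans_le (min_le_right _ _)
      calc dist y w ≤ dist y q + dist q w := dist_triangle _ _ _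
        _ ≤ (dist y p + dist p q) + (dist q r + dist r w) :=
            add_le_add (dist_triangle _ _ _) (dist_triangle _ _ _)
        _ < ε := by linarith
    refine mem_omega_of_approx' f x y fun ε hε N => ?_
    obtain ⟨w, hw, hyw⟩ := key (ε/2) (by positivity)
    obtain ⟨m, hm, hwt⟩ := hw
    obtain ⟨I, hI⟩ := Metric.tendsto_atTop.mp hwt (ε/2) (by positivity)
    refine ⟨m (max I N), le_trans (le_max_right _ _) hm.le_apply, ?_⟩
    have hIN := hI (max I N) (le_max_left _ _)
    calc dist (f^[m (max I N)] x) y ≤ dist (f^[m (max I N)] x) w + dist w y :=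
          dist_triangle _ _ _
      _ < ε := by rw [dist_comm w y]; linarith
end

section
/- Let X be a compact metric space and f : X → X an equicontinuous continuous map. Then Ω(x, f^n) = ω(x, f^n) for all x ∈ X and all n ≥ 1. -/
open Filter Topology Set

/-- If f is equicontinuous, then Ω(x,fⁿ) = ω(x,fⁿ) for all x and n ≥ 1. -/
theorem prolong_eq_omega_iterate_of_equicontinuous {X : Type*} [MetricSpace X]
    [CompactSpace X] (f : X → X) (hf : Continuous f)
    (heq : EquicontinuousMap f) :
    ∀ x : X, ∀ n : ℕ, 1 ≤ n → prolongPts (f^[n]) x = omegaLimitPts (f^[n]) x := by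
  intro x n hn
  ext y
  constructor
  · rintro ⟨xs, m, hm, hxs, hy⟩
    refine ⟨m, hm, ?_⟩
    rw [Metric.tendsto_atTop] at *
    intro ε hε
    obtain ⟨δ, hδ, hδ'⟩ := heq (ε/2) (by linarith)
    obtain ⟨N1, hN1⟩ := hxs δ hδ
    obtain ⟨N2, hN2⟩ := hy (ε/2) (by linarith)
    refine ⟨max N1 N2, fun i hi => ?_⟩
    have h1 := hδ' x (xs i) (by rw [dist_comm]; exact hN1 i (le_trans (le_max_left _ _) hi)) (n * m i)
    rw [Function.iterate_mul] at h1
    calc dist ((f^[n])^[m i] x) y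
        ≤ dist ((f^[n])^[m i] x) ((f^[n])^[m i] (xs i)) + dist ((f^[n])^[m i] (xs i)) y :=
          dist_triangle _ _ _
      _ < ε/2 + ε/2 := add_lt_add h1 (hN2 i (le_trans (le_max_right _ _) hi))
      _ = ε := by linarith
  · rintro ⟨m, hm, hy⟩
    exact ⟨fun _ => x, m, hm, tendsto_const_nhds, hy⟩
end

section
/- Let X be a compact metric space and f : X → X a continuous equicontinuous map. Then the map ω_f : X → 2^X, x ↦ ω(x,f), is continuous with respect to the Hausdorff metric. -/
open Filter Topology Set

/-- If f is equicontinuous, then ω_f is continuous (Hausdorff metric). -/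
theorem omegaMapContinuous_of_equicontinuous {X : Type*} [MetricSpace X]
    [CompactSpace X] (f : X → X) (hf : Continuous f)
    (heq : EquicontinuousMap f) :
    OmegaMapContinuous f := by
  intro x₀ ε hε
  obtain ⟨δ, hδ, hδ'⟩ := heq (ε / 2) (by linarith)
  refine ⟨δ, hδ, fun x hx => ?_⟩
  have key : ∀ a b : X, dist a b < δ → ∀ z ∈ omegaLimitPts f a,
      ∃ w ∈ omegaLimitPts f b, dist z w ≤ ε / 2 := by
    intro a b hab z hz
    obtain ⟨n, hn, hzn⟩ := hz
    obtain ⟨w, φ, hφ, hw⟩ := CompactSpace.tendsto_subseq (fun i => f^[n i] b)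
    refine ⟨w, ⟨n ∘ φ, hn.comp hφ, hw⟩, ?_⟩
    have hdist : Tendsto (fun i => dist (f^[n (φ i)] a) (f^[n (φ i)] b))
        atTop (𝓝 (dist z w)) :=
      ((hzn.comp hφ.tendsto_atTop).dist hw)
    exact le_of_tendsto hdist (Eventually.of_forall fun i =>
      le_of_lt (hδ' a b hab (n (φ i))))
  have h1 := key x x₀ hx
  have h2 := key x₀ x (by rwa [dist_comm] at hx)
  have hH : Metric.hausdorffDist (omegaLimitPts f x) (omegaLimitPts f x₀) ≤ ε / 2 :=
    Metric.hausdorffDist_le_of_mem_dist (by linarith) h1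
      (fun w hw => by
        obtain ⟨z, hz, hd⟩ := h2 w hw
        exact ⟨z, hz, dist_comm w z ▸ hd⟩)
  linarith
end

section
/- Let X be a compact metric space and f : X → X a continuous map. If ω(x,f) = Ω(x,f) for every x ∈ X, then the map ω_f : x ↦ ω(x,f) is upper semicontinuous. -/
open Filter Topology Set

/-- If ω(x,f) = Ω(x,f) for every x, then ω_f is upper semicontinuous. -/
theorem omegaMap_usc_of_omega_eq_prolong {X : Type*} [MetricSpace X] [CompactSpace X]
    (f : X → X) (hf : Continuous f)
    (h : ∀ x : X, omegaLimitPts f x = prolongPts f x) :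
    ∀ x₀ : X, ∀ V : Set X, IsOpen V → omegaLimitPts f x₀ ⊆ V →
      ∃ U ∈ 𝓝 x₀, ∀ x ∈ U, omegaLimitPts f x ⊆ V := by
  intro x₀ V hV hsub
  by_contra hcon
  push_neg at hcon
  have key : ∀ k : ℕ, ∃ x z, dist x x₀ < 1/(k+1) ∧ z ∈ omegaLimitPts f x ∧ z ∉ V := by
    intro k
    obtain ⟨xx, hxU, hns⟩ := hcon (Metric.ball x₀ (1/(k+1)))
      (Metric.ball_mem_nhds _ (by positivity))
    rw [Set.not_subset] at hns
    obtain ⟨z, hz, hzV⟩ := hns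
    exact ⟨xx, z, by simpa [Metric.mem_ball] using hxU, hz, hzV⟩
  choose x z hx hz hzV using key
  have step : ∀ k B : ℕ, ∃ m, B < m ∧ dist (f^[m] (x k)) (z k) < 1/(k+1) := by
    intro k B
    obtain ⟨n, hn, htend⟩ := hz k
    have hev : ∀ᶠ i in atTop, dist (f^[n i] (x k)) (z k) < 1/(k+1) :=
      (Metric.tendsto_nhds.mp htend) _ (by positivity)
    obtain ⟨i, hi1, hi2⟩ := ((eventually_ge_atTop (B+1)).and hev).exists
    exact ⟨n i, lt_of_lt_of_le hi1 hn.le_apply, hi2⟩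
  choose g hg1 hg2 using step
  let m : ℕ → ℕ := fun k => Nat.rec (g 0 0) (fun k mk => g (k+1) mk) k
  have hm_mono : StrictMono m :=
    strictMono_nat_of_lt_succ (fun k => hg1 (k+1) (m k))
  have hm_dist : ∀ k, dist (f^[m k] (x k)) (z k) < 1/(k+1) := by
    intro k
    cases k with
    | zero => exact hg2 0 0
    | succ k => exact hg2 (k+1) (m k)
  have hVc : IsCompact (Vᶜ : Set X) := hV.isClosed_compl.isCompact
  obtain ⟨y, hyVc, φ, hφ, hty⟩ := hVc.tendsto_subseq (fun k => hzV k)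
  have hinv : Tendsto (fun j : ℕ => 1/((j:ℝ)+1)) atTop (𝓝 0) :=
    tendsto_one_div_add_atTop_nhds_zero_nat
  have hbd : ∀ j : ℕ, (1:ℝ)/(φ j + 1) ≤ 1/(j+1) := by
    intro j
    apply one_div_le_one_div_of_le (by positivity)
    have hj : j ≤ φ j := hφ.le_apply
    have : (j:ℝ) ≤ (φ j : ℝ) := Nat.cast_le.mpr hj
    linarith
  have hxs : Tendsto (fun j => x (φ j)) atTop (𝓝 x₀) := by
    rw [tendsto_iff_dist_tendsto_zero]
    apply squeeze_zero (fun j => dist_nonneg) (fun j => ?_) hinv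
    exact le_trans (hx (φ j)).le (hbd j)
  have hfy : Tendsto (fun j => f^[m (φ j)] (x (φ j))) atTop (𝓝 y) := by
    rw [tendsto_iff_dist_tendsto_zero]
    have hz0 : Tendsto (fun j => dist (z (φ j)) y) atTop (𝓝 0) := by
      rw [← tendsto_iff_dist_tendsto_zero]; exact hty
    have hsum : Tendsto (fun j : ℕ => 1/((j:ℝ)+1) + dist (z (φ j)) y) atTop (𝓝 (0+0)) :=
      hinv.add hz0
    rw [add_zero] at hsum
    apply squeeze_zero (fun j => dist_nonneg) (fun j => ?_) hsum
    calc dist (f^[m (φ j)] (x (φ j))) y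
        ≤ dist (f^[m (φ j)] (x (φ j))) (z (φ j)) + dist (z (φ j)) y := dist_triangle _ _ _
      _ ≤ 1/((j:ℝ)+1) + dist (z (φ j)) y := by
          gcongr
          exact le_trans (hm_dist (φ j)).le (hbd j)
  have hyP : y ∈ prolongPts f x₀ :=
    ⟨fun j => x (φ j), fun j => m (φ j), hm_mono.comp hφ, hxs, hfy⟩
  rw [← h x₀] at hyP
  exact hyVc (hsub hyP)
end

section
/- Let X be a compact metric space and f : X → X a continuous map such that every point of X is periodic. Then the map ω_f : x ↦ ω(x,f) is lower semicontinuous. -/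
open Filter Topology Set

private lemma iter_mul_fix {X : Type*} (f : X → X) {k : ℕ} {x : X}
    (hk : f^[k] x = x) : ∀ q : ℕ, f^[k * q] x = x := by
  intro q
  induction q with
  | zero => simp
  | succ q ih => rw [Nat.mul_succ, Function.iterate_add_apply, hk, ih]

/-- For a periodic point, every orbit point is in its omega limit set. -/
private lemma orbit_mem_omega {X : Type*} [TopologicalSpace X] (f : X → X) {k : ℕ}
    (hk : 0 < k) {x : X} (hx : f^[k] x = x) (m : ℕ) :
    f^[m] x ∈ omegaLimitPts f x := by
  refine ⟨fun i => m + i * k, ?_, ?_⟩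
  · intro a b hab
    dsimp only
    have := (Nat.mul_lt_mul_right hk).mpr hab
    omega
  · have h : ∀ i, f^[m + i * k] x = f^[m] x := by
      intro i
      rw [Function.iterate_add_apply, Nat.mul_comm, iter_mul_fix f hx i]
    simp only [h]
    exact tendsto_const_nhds

/-- For a periodic point, the omega limit set is contained in the orbit. -/
private lemma omega_subset_orbit {X : Type*} [MetricSpace X] (f : X → X) {k : ℕ}
    (hk : 0 < k) {x y : X} (hx : f^[k] x = x)
    (hy : y ∈ omegaLimitPts f x) : ∃ m, y = f^[m] x := by
  obtain ⟨n, hmono, htend⟩ := hy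
  set g : ℕ → Fin k := fun i => ⟨n i % k, Nat.mod_lt _ hk⟩ with hg
  obtain ⟨r, hr⟩ := Finite.exists_infinite_fiber g
  have hS : {i | g i = r}.Infinite := Set.infinite_coe_iff.mp hr
  set φ := Nat.nth (fun i => g i = r) with hφ
  have hφmono : StrictMono φ := Nat.nth_strictMono hS
  have hφmem : ∀ j, g (φ j) = r := fun j => Nat.nth_mem_of_infinite hS j
  have hconst : ∀ j, f^[n (φ j)] x = f^[(r : ℕ)] x := by
    intro j
    have hmod : n (φ j) % k = (r : ℕ) := congrArg Fin.val (hφmem j)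
    have hdecomp : n (φ j) = (r : ℕ) + k * (n (φ j) / k) := by
      rw [← hmod, Nat.add_comm, Nat.div_add_mod]
    rw [hdecomp, Function.iterate_add_apply, iter_mul_fix f hx]
  have htend' : Tendsto (fun j => f^[n (φ j)] x) atTop (𝓝 y) :=
    htend.comp hφmono.tendsto_atTop
  have : Tendsto (fun _ : ℕ => f^[(r : ℕ)] x) atTop (𝓝 y) := by
    simpa only [hconst] using htend'
  exact ⟨r, tendsto_nhds_unique this tendsto_const_nhds⟩

/-- If every point is periodic, then ω_f is lower semicontinuous. -/
theorem omegaMap_lsc_of_all_periodic {X : Type*} [MetricSpace X] [CompactSpace X]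
    (f : X → X) (hf : Continuous f)
    (hper : ∀ x : X, x ∈ Function.periodicPts f) :
    ∀ x₀ : X, ∀ V : Set X, IsOpen V → (V ∩ omegaLimitPts f x₀).Nonempty →
      ∃ U ∈ 𝓝 x₀, ∀ x ∈ U, (V ∩ omegaLimitPts f x).Nonempty := by
  intro x₀ V hV ⟨y, hyV, hyω⟩
  obtain ⟨k₀, hk₀pos, hk₀⟩ := hper x₀
  obtain ⟨m, rfl⟩ := omega_subset_orbit f hk₀pos hk₀ hyω
  refine ⟨f^[m] ⁻¹' V, ?_, ?_⟩
  · exact (hV.preimage (hf.iterate m)).mem_nhds hyV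
  · intro x hx
    obtain ⟨k, hkpos, hk⟩ := hper x
    exact ⟨f^[m] x, hx, orbit_mem_omega f hkpos hk m⟩
end

section
/- Let X be a dendrite and p an end point of X. If A is a compact subset of X with p ∉ A, then there exists a subcontinuum W of X such that A ⊆ W ⊆ X \ {p}. -/
open Filter Topology Set

/-- In a dendrite, any compact set missing an end point p is contained in a
subcontinuum avoiding p. -/
theorem subcontinuum_avoiding_endpoint {X : Type*} [MetricSpace X] [CompactSpace X]
    [ConnectedSpace X] [LocallyConnectedSpace X] [Nonempty X]
    (hX : NoSimpleClosedCurve X)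
    (p : X) (hp : IsEndpoint p) (A : Set X) (hA : IsCompact A) (hpA : p ∉ A) :
    ∃ W : Set X, IsCompact W ∧ IsConnected W ∧ A ⊆ W ∧ W ⊆ {p}ᶜ := by
  obtain ⟨V, hVopen, hpV, hVA, b, hbV⟩ := hp Aᶜ hA.isClosed.isOpen_compl hpA
  have hbfr : b ∈ frontier V := by rw [hbV]; rfl
  have hbC : b ∈ Vᶜ := fun hb => (hVopen.frontier_eq ▸ hbfr).2 hb
  have hclV : closure V = V ∪ {b} := by
    rw [closure_eq_self_union_frontier, hbV]
  -- key: for any closed disjoint cover (u, v) of Vᶜ with b ∈ u, Vᶜ ⊆ u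
  have key : ∀ u v : Set X, IsClosed u → IsClosed v → Vᶜ ⊆ u ∪ v → Disjoint u v →
      b ∈ u → Vᶜ ⊆ u := by
    intro u v hu hv hcov hdisj hbu
    set S : Set X := V ∪ (Vᶜ ∩ u) with hS
    have hScompl : S = (Vᶜ ∩ v)ᶜ := by
      ext x
      constructor
      · rintro (hx | ⟨hx1, hx2⟩) ⟨hy1, hy2⟩
        · exact hy1 hx
        · exact hdisj.ne_of_mem hx2 hy2 rfl
      · intro hx
        by_cases hxV : x ∈ V
        · exact Or.inl hxV
        · refine Or.inr ⟨hxV, ?_⟩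
          rcases hcov hxV with h | h
          · exact h
          · exact absurd ⟨hxV, h⟩ hx
    have hSopen : IsOpen S := by
      rw [hScompl]; exact (hVopen.isClosed_compl.inter hv).isOpen_compl
    have hSclosed : IsClosed S := by
      have h1 : closure S ⊆ S := by
        calc closure S ⊆ closure V ∪ closure (Vᶜ ∩ u) := by
              rw [← closure_union]
            _ ⊆ (V ∪ {b}) ∪ (Vᶜ ∩ u) := by
              rw [hclV]
              exact union_subset_union_right _
                (hVopen.isClosed_compl.inter hu).closure_subset
            _ ⊆ S := by
              rintro x ((h | h) | h)
              · exact Or.inl h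
              · exact Or.inr ⟨hbC ∘ (h ▸ id), h ▸ hbu⟩
              · exact Or.inr h
      exact isClosed_of_closure_subset h1
    have hSuniv : S = univ := by
      rcases isClopen_iff.mp ⟨hSclosed, hSopen⟩ with h | h
      · exact absurd (h ▸ Or.inl hpV : p ∈ (∅ : Set X)) (notMem_empty p)
      · exact h
    intro x hx
    rcases hcov hx with h | h
    · exact h
    · have : x ∈ S := hSuniv ▸ mem_univ x
      rcases this with h' | h'
      · exact absurd h' hx
      · exact h'.2
  refine ⟨Vᶜ, hVopen.isClosed_compl.isCompact, ⟨⟨b, hbC⟩, ?_⟩, ?_, ?_⟩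
  · rw [isPreconnected_iff_subset_of_fully_disjoint_closed hVopen.isClosed_compl]
    intro u v hu hv hcov hdisj
    rcases hcov hbC with hbu | hbv
    · exact Or.inl (key u v hu hv hcov hdisj hbu)
    · exact Or.inr (key v u hv hu (union_comm u v ▸ hcov) hdisj.symm hbv)
  · intro a ha haV
    exact hVA haV ha
  · intro x hx hxp
    exact hx (mem_singleton_iff.mp hxp ▸ hpV)
end

section
/- Let X be a dendrite and f : X → X a continuous map. If Ω(x,f) is totally disconnected for each x ∈ X, then f is equicontinuous. -/
open Filter Topology Set

private lemma tendsto_of_dist_lt_nat {X : Type*} [MetricSpace X] {g : ℕ → X} {y : X}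
    (h : ∀ k : ℕ, dist (g k) y < 1 / ((k : ℝ) + 1)) : Tendsto g atTop (𝓝 y) := by
  rw [tendsto_iff_dist_tendsto_zero]
  exact squeeze_zero (fun k => dist_nonneg) (fun k => (h k).le)
    tendsto_one_div_add_atTop_nhds_zero_nat

private lemma unif_loc_conn {X : Type*} [MetricSpace X] [CompactSpace X]
    [LocallyConnectedSpace X] {ε : ℝ} (hε : 0 < ε) :
    ∃ δ > (0:ℝ), ∀ u v : X, dist u v < δ →
      ∃ C : Set X, IsPreconnected C ∧ u ∈ C ∧ v ∈ C ∧ ∀ z ∈ C, dist z u < ε := by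
  set U : X → Set X := fun x => connectedComponentIn (Metric.ball x (ε / 2)) x with hU
  have hUo : ∀ x, IsOpen (U x) := fun x => Metric.isOpen_ball.connectedComponentIn
  have hmem : ∀ x, x ∈ U x := fun x =>
    mem_connectedComponentIn (Metric.mem_ball_self (by linarith))
  have hcov : (Set.univ : Set X) ⊆ ⋃ x, U x := fun x _ => mem_iUnion.2 ⟨x, hmem x⟩
  obtain ⟨δ, hδ, hball⟩ := lebesgue_number_lemma_of_metric isCompact_univ hUo hcov
  refine ⟨δ, hδ, fun u v huv => ?_⟩
  obtain ⟨x, hx⟩ := hball u (mem_univ u)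
  have hsub : U x ⊆ Metric.ball x (ε / 2) := connectedComponentIn_subset _ _
  have huU : u ∈ U x := hx (Metric.mem_ball_self hδ)
  have hvU : v ∈ U x := hx (by simpa [Metric.mem_ball, dist_comm] using huv)
  refine ⟨U x, (isConnected_connectedComponentIn_iff.2
    (Metric.mem_ball_self (by linarith))).isPreconnected, huU, hvU, fun z hz => ?_⟩
  have h1 : dist z x < ε / 2 := Metric.mem_ball.1 (hsub hz)
  have h2 : dist u x < ε / 2 := Metric.mem_ball.1 (hsub huU)
  calc dist z u ≤ dist z x + dist x u := dist_triangle _ _ _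
    _ < ε := by rw [dist_comm x u]; linarith

private lemma iter_unif {X : Type*} [MetricSpace X] [CompactSpace X] {f : X → X}
    (hf : Continuous f) {ε : ℝ} (hε : 0 < ε) (m : ℕ) :
    ∃ η > (0:ℝ), ∀ p q : X, dist p q < η → ∀ k ≤ m, dist (f^[k] p) (f^[k] q) < ε := by
  induction m with
  | zero =>
    refine ⟨ε, hε, fun p q hpq k hk => ?_⟩
    obtain rfl := Nat.le_zero.1 hk
    simpa using hpq
  | succ m ih =>
    obtain ⟨η, hη, H⟩ := ih
    obtain ⟨η', hη', H'⟩ := Metric.uniformContinuous_iff.1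
      (CompactSpace.uniformContinuous_of_continuous (hf.iterate (m + 1))) ε hε
    refine ⟨min η η', lt_min hη hη', fun p q hpq k hk => ?_⟩
    rcases eq_or_lt_of_le hk with rfl | hlt
    · exact H' (hpq.trans_le (min_le_right _ _))
    · exact H p q (hpq.trans_le (min_le_left _ _)) k (Nat.lt_succ_iff.1 hlt)

private lemma tendsto_of_dist_lt_nat' {X : Type*} [MetricSpace X] {g : ℕ → X} {y : X}
    (h : ∀ k : ℕ, dist (g k) y < 1 / ((k : ℝ) + 1)) : Tendsto g atTop (𝓝 y) := by
  rw [tendsto_iff_dist_tendsto_zero]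
  exact squeeze_zero (fun k => dist_nonneg) (fun k => (h k).le)
    tendsto_one_div_add_atTop_nhds_zero_nat

private def trapSet {X : Type*} [MetricSpace X] (f : X → X) (x0 : X) (k : ℕ) : Set X :=
  (fun p : ℕ × X => f^[p.1] p.2) '' {p : ℕ × X | k ≤ p.1 ∧ dist p.2 x0 < 1 / ((k : ℝ) + 1)}

private lemma mem_prolong_of_mem_trap {X : Type*} [MetricSpace X] {f : X → X} {x0 y : X}
    (hy : ∀ k : ℕ, y ∈ closure (trapSet f x0 k)) : y ∈ prolongPts f x0 := by
  have H : ∀ k : ℕ, ∃ p : ℕ × X, k ≤ p.1 ∧ dist p.2 x0 < 1 / ((k:ℝ) + 1) ∧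
      dist (f^[p.1] p.2) y < 1 / ((k:ℝ) + 1) := by
    intro k
    have hk : (0:ℝ) < 1 / ((k:ℝ) + 1) := by positivity
    obtain ⟨s, hs, hd⟩ := Metric.mem_closure_iff.1 (hy k) _ hk
    obtain ⟨p, hp, rfl⟩ := hs
    exact ⟨p, hp.1, hp.2, by rwa [dist_comm] at hd⟩
  choose p hp1 hp2 hp3 using H
  set N : ℕ → ℕ := fun k => (p k).1 with hN
  set Z : ℕ → X := fun k => (p k).2 with hZ
  let φ : ℕ → ℕ := fun j => Nat.rec 0 (fun _ prev => N prev + 1) j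
  have hφs : ∀ j, φ (j + 1) = N (φ j) + 1 := fun j => rfl
  have hφmono : StrictMono φ := strictMono_nat_of_lt_succ fun j => by
    rw [hφs]; exact Nat.lt_succ_of_le (hp1 (φ j))
  refine ⟨Z ∘ φ, N ∘ φ, ?_, ?_, ?_⟩
  · refine strictMono_nat_of_lt_succ fun j => ?_
    have h1 : N (φ j) + 1 ≤ N (N (φ j) + 1) := hp1 _
    have : N (φ (j + 1)) = N (N (φ j) + 1) := by rw [hφs]
    simp only [Function.comp_apply, this, hφs]
    exact Nat.lt_of_succ_le h1
  · exact (tendsto_of_dist_lt_nat' hp2).comp hφmono.tendsto_atTop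
  · exact (tendsto_of_dist_lt_nat' hp3).comp hφmono.tendsto_atTop

private lemma mem_trap_closure_of_tendsto {X : Type*} [MetricSpace X] {f : X → X} {x0 y : X}
    {m : ℕ → ℕ} {q : ℕ → X} (hm : Tendsto m atTop atTop) (hq : Tendsto q atTop (𝓝 x0))
    (hy : Tendsto (fun j => f^[m j] (q j)) atTop (𝓝 y)) (k : ℕ) :
    y ∈ closure (trapSet f x0 k) := by
  have hk : (0:ℝ) < 1 / ((k:ℝ) + 1) := by positivity
  have h1 : ∀ᶠ j in atTop, k ≤ m j := hm.eventually (eventually_ge_atTop k)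
  have h2 : ∀ᶠ j in atTop, dist (q j) x0 < 1 / ((k:ℝ) + 1) :=
    hq (Metric.ball_mem_nhds x0 hk)
  refine mem_closure_of_tendsto hy ?_
  filter_upwards [h1, h2] with j hj1 hj2
  exact ⟨(m j, q j), ⟨hj1, hj2⟩, rfl⟩

private lemma exists_separation {X : Type*} [MetricSpace X] {K : Set X} (hK : IsCompact K)
    (hTD : IsTotallyDisconnected K) {a b : X} (ha : a ∈ K) (hb : b ∈ K) (hab : a ≠ b) :
    ∃ A B : Set X, IsCompact A ∧ IsCompact B ∧ A ∪ B = K ∧ Disjoint A B ∧ a ∈ A ∧ b ∈ B := by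
  have h1 : CompactSpace K := isCompact_iff_compactSpace.1 hK
  have h2 : TotallyDisconnectedSpace K := totallyDisconnectedSpace_subtype_iff.2 hTD
  have hts : TotallySeparatedSpace K := loc_compact_t2_tot_disc_iff_tot_sep.1 h2
  obtain ⟨U, hU, haU, hbU⟩ := totallySeparatedSpace_iff_exists_isClopen.1 hts
    (fun hh => hab (Subtype.ext_iff.1 hh) : (⟨a, ha⟩ : K) ≠ ⟨b, hb⟩)
  refine ⟨Subtype.val '' U, Subtype.val '' Uᶜ, ?_, ?_, ?_, ?_,
    ⟨⟨a, ha⟩, haU, rfl⟩, ⟨⟨b, hb⟩, hbU, rfl⟩⟩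
  · exact (hU.isClosed.isCompact).image continuous_subtype_val
  · exact (hU.compl.isClosed.isCompact).image continuous_subtype_val
  · rw [← image_union, union_compl_self, image_univ, Subtype.range_val]
  · exact disjoint_image_of_injective Subtype.val_injective disjoint_compl_right


/-- If Ω(x,f) is totally disconnected for each x in a dendrite, then f is
equicontinuous. -/
theorem equicontinuous_of_prolong_totallyDisconnected {X : Type*} [MetricSpace X]
    [CompactSpace X] [ConnectedSpace X] [LocallyConnectedSpace X] [Nonempty X]
    (hX : NoSimpleClosedCurve X) (f : X → X) (hf : Continuous f)
    (h : ∀ x : X, IsTotallyDisconnected (prolongPts f x)) :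
    EquicontinuousMap f := by
  by_contra hne
  rw [EquicontinuousMap] at hne
  push_neg at hne
  obtain ⟨ε, hε, H⟩ := hne
  have htest : ∀ δ > (0:ℝ), ∃ x y : X, dist x y < δ ∧ ∃ n : ℕ, ε ≤ dist (f^[n] x) (f^[n] y) := H
  -- Step 1: bad pairs with small connected bridging sets
  have main : ∀ i : ℕ, ∃ (u v : X) (n : ℕ) (C : Set X), IsPreconnected C ∧ u ∈ C ∧ v ∈ C ∧
      (∀ z ∈ C, dist z u < 1 / ((i:ℝ) + 1)) ∧ ε ≤ dist (f^[n] u) (f^[n] v) := by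
    intro i
    have hi : (0:ℝ) < 1 / ((i:ℝ) + 1) := by positivity
    obtain ⟨δ, hδ, hC⟩ := unif_loc_conn (X := X) hi
    obtain ⟨p, q, hpq, n, hn⟩ := htest (min δ (1 / ((i:ℝ) + 1))) (lt_min hδ hi)
    obtain ⟨C, hCp, huC, hvC, hdiam⟩ := hC p q (hpq.trans_le (min_le_left _ _))
    exact ⟨p, q, n, C, hCp, huC, hvC, hdiam, hn⟩
  choose u v n C hCp huC hvC hdiam hsep using main
  have hduv : ∀ i : ℕ, dist (u i) (v i) < 1 / ((i:ℝ) + 1) := fun i => by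
    rw [dist_comm]; exact hdiam i (v i) (hvC i)
  -- Step 2: n tends to infinity
  have hn_top : Tendsto n atTop atTop := by
    rw [tendsto_atTop]
    intro m
    obtain ⟨η, hη, Hm⟩ := iter_unif hf hε m
    have hev : ∀ᶠ i : ℕ in atTop, 1 / ((i:ℝ) + 1) < η :=
      tendsto_one_div_add_atTop_nhds_zero_nat.eventually_lt_const hη
    filter_upwards [hev] with i hi
    by_contra hcon
    push_neg at hcon
    exact absurd (hsep i)
      (not_le.2 (Hm (u i) (v i) ((hduv i).trans hi) (n i) hcon.le))
  -- Step 3: convergent subsequence of (u i, fⁿ u i, fⁿ v i)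
  obtain ⟨lim, -, φ, hφ, hconv⟩ := isCompact_univ.tendsto_subseq
    (x := fun i => ((u i, f^[n i] (u i), f^[n i] (v i)) : X × X × X)) (fun i => mem_univ _)
  obtain ⟨x0, a, b⟩ := lim
  have hu : Tendsto (fun j => u (φ j)) atTop (𝓝 x0) :=
    (continuous_fst.tendsto _).comp hconv
  have ha : Tendsto (fun j => f^[n (φ j)] (u (φ j))) atTop (𝓝 a) :=
    ((continuous_fst.comp continuous_snd).tendsto _).comp hconv
  have hb : Tendsto (fun j => f^[n (φ j)] (v (φ j))) atTop (𝓝 b) :=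
    ((continuous_snd.comp continuous_snd).tendsto _).comp hconv
  have hv : Tendsto (fun j => v (φ j)) atTop (𝓝 x0) := by
    apply Filter.Tendsto.congr_dist (f₁ := fun j => u (φ j)) hu
    have h0 : Tendsto (fun j : ℕ => 1 / ((φ j : ℝ) + 1)) atTop (𝓝 0) :=
      tendsto_one_div_add_atTop_nhds_zero_nat.comp hφ.tendsto_atTop
    exact squeeze_zero (fun j => dist_nonneg)
      (fun j => (hduv (φ j)).le) h0
  have hnφ : Tendsto (fun j => n (φ j)) atTop atTop := hn_top.comp hφ.tendsto_atTop
  have hab : ε ≤ dist a b := ge_of_tendsto' (ha.dist hb) (fun j => hsep (φ j))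
  have hane : a ≠ b := by
    intro hh; rw [hh, dist_self] at hab; linarith
  -- Step 4: the compact set K inside prolongPts f x0
  set K : Set X := ⋂ k : ℕ, closure (trapSet f x0 k) with hKdef
  have hKclosed : IsClosed K := isClosed_iInter fun k => isClosed_closure
  have hKcomp : IsCompact K := hKclosed.isCompact
  have hKsub : K ⊆ prolongPts f x0 := fun y hy =>
    mem_prolong_of_mem_trap (fun k => mem_iInter.1 hy k)
  have hKtd : IsTotallyDisconnected K := fun t ht hpc => h x0 t (ht.trans hKsub) hpc
  have haK : a ∈ K := mem_iInter.2 (fun k => mem_trap_closure_of_tendsto hnφ hu ha k)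
  have hbK : b ∈ K := mem_iInter.2 (fun k => mem_trap_closure_of_tendsto hnφ hv hb k)
  -- Step 5: clopen separation of K and a positive gap r
  obtain ⟨A, B, hAc, hBc, hABK, hABd, haA, hbB⟩ := exists_separation hKcomp hKtd haK hbK hane
  obtain ⟨m0, hm0, hmin⟩ := (hAc.prod hBc).exists_isMinOn ⟨(a, b), haA, hbB⟩
    (continuous_dist.continuousOn)
  set r : ℝ := dist m0.1 m0.2 with hrdef
  have hr : 0 < r := dist_pos.2 (hABd.ne_of_mem hm0.1 hm0.2)
  have hrle : ∀ p ∈ A, ∀ q ∈ B, r ≤ dist p q := fun p hp q hq =>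
    hmin (Set.mk_mem_prod hp hq)
  -- Step 6: points of the connected bridges staying r/3-far from K
  have hwseq : ∀ᶠ j in atTop, ∃ z ∈ C (φ j),
      r / 3 ≤ Metric.infDist (f^[n (φ j)] z) A ∧ r / 3 ≤ Metric.infDist (f^[n (φ j)] z) B := by
    have evA : ∀ᶠ j in atTop, dist (f^[n (φ j)] (u (φ j))) a < r / 3 :=
      ha (Metric.ball_mem_nhds a (by linarith))
    have evB : ∀ᶠ j in atTop, dist (f^[n (φ j)] (v (φ j))) b < r / 3 :=
      hb (Metric.ball_mem_nhds b (by linarith))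
    filter_upwards [evA, evB] with j hjA hjB
    set L : Set X := f^[n (φ j)] '' C (φ j) with hLdef
    have hL : IsPreconnected L := (hCp (φ j)).image _ (hf.iterate _).continuousOn
    by_contra hcon
    push_neg at hcon
    have hsubL : L ⊆ {p | Metric.infDist p A < r / 3} ∪ {p | Metric.infDist p B < r / 3} := by
      rintro - ⟨z, hz, rfl⟩
      rcases lt_or_ge (Metric.infDist (f^[n (φ j)] z) A) (r / 3) with hlt | hge
      · exact Or.inl hlt
      · exact Or.inr (hcon z hz hge)
    have hne1 : (L ∩ {p | Metric.infDist p A < r / 3}).Nonempty := by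
      refine ⟨f^[n (φ j)] (u (φ j)), ⟨u (φ j), huC (φ j), rfl⟩, ?_⟩
      exact lt_of_le_of_lt (Metric.infDist_le_dist_of_mem haA) hjA
    have hne2 : (L ∩ {p | Metric.infDist p B < r / 3}).Nonempty := by
      refine ⟨f^[n (φ j)] (v (φ j)), ⟨v (φ j), hvC (φ j), rfl⟩, ?_⟩
      exact lt_of_le_of_lt (Metric.infDist_le_dist_of_mem hbB) hjB
    obtain ⟨p, -, hpA, hpB⟩ := hL _ _
      (isOpen_lt (Metric.continuous_infDist_pt A) continuous_const)
      (isOpen_lt (Metric.continuous_infDist_pt B) continuous_const)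
      hsubL hne1 hne2
    obtain ⟨pa, hpa, hda⟩ := (Metric.infDist_lt_iff ⟨a, haA⟩).1 hpA
    obtain ⟨pb, hpb, hdb⟩ := (Metric.infDist_lt_iff ⟨b, hbB⟩).1 hpB
    have : dist pa pb < r := by
      calc dist pa pb ≤ dist pa p + dist p pb := dist_triangle _ _ _
        _ < r := by rw [dist_comm pa p]; linarith
    exact absurd (hrle pa hpa pb hpb) (not_le.2 this)
  -- Step 7: extract the far sequence and its limit
  obtain ⟨J, hJ⟩ := eventually_atTop.1 hwseq
  have hz' : ∀ j : ℕ, ∃ z, z ∈ C (φ (j + J)) ∧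
      r / 3 ≤ Metric.infDist (f^[n (φ (j + J))] z) A ∧
      r / 3 ≤ Metric.infDist (f^[n (φ (j + J))] z) B := by
    intro j
    obtain ⟨z, hz1, hz2, hz3⟩ := hJ (j + J) (Nat.le_add_left J j)
    exact ⟨z, hz1, hz2, hz3⟩
  choose z hz1 hz2 hz3 using hz'
  have hJtop : Tendsto (fun j : ℕ => j + J) atTop atTop := tendsto_add_atTop_nat J
  have hzx0 : Tendsto z atTop (𝓝 x0) := by
    apply Filter.Tendsto.congr_dist (f₁ := fun j => u (φ (j + J))) (hu.comp hJtop)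
    have h0 : Tendsto (fun j : ℕ => 1 / ((φ (j + J) : ℝ) + 1)) atTop (𝓝 0) :=
      tendsto_one_div_add_atTop_nhds_zero_nat.comp (hφ.tendsto_atTop.comp hJtop)
    refine squeeze_zero (fun j => dist_nonneg) (fun j => ?_) h0
    rw [dist_comm]
    exact (hdiam (φ (j + J)) (z j) (hz1 j)).le
  obtain ⟨w, -, ψ, hψ, hwconv⟩ := isCompact_univ.tendsto_subseq
    (x := fun j => f^[n (φ (j + J))] (z j)) (fun j => mem_univ _)
  have hwK : w ∈ K := by
    refine mem_iInter.2 (fun k => mem_trap_closure_of_tendsto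
      (m := fun l => n (φ (ψ l + J))) (q := fun l => z (ψ l)) ?_ ?_ ?_ k)
    · exact hn_top.comp (hφ.tendsto_atTop.comp (hJtop.comp hψ.tendsto_atTop))
    · exact hzx0.comp hψ.tendsto_atTop
    · exact hwconv
  have hwAB : w ∈ A ∪ B := by rw [hABK]; exact hwK
  have hwnear : ∀ᶠ l in atTop, dist (f^[n (φ (ψ l + J))] (z (ψ l))) w < r / 3 :=
    hwconv (Metric.ball_mem_nhds w (by linarith))
  obtain ⟨l, hl⟩ := hwnear.exists
  rcases hwAB with hwA | hwB
  · have h1 : r / 3 ≤ Metric.infDist (f^[n (φ (ψ l + J))] (z (ψ l))) A := hz2 (ψ l)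
    have h2 : Metric.infDist (f^[n (φ (ψ l + J))] (z (ψ l))) A ≤
        dist (f^[n (φ (ψ l + J))] (z (ψ l))) w := Metric.infDist_le_dist_of_mem hwA
    linarith
  · have h1 : r / 3 ≤ Metric.infDist (f^[n (φ (ψ l + J))] (z (ψ l))) B := hz3 (ψ l)
    have h2 : Metric.infDist (f^[n (φ (ψ l + J))] (z (ψ l))) B ≤
        dist (f^[n (φ (ψ l + J))] (z (ψ l))) w := Metric.infDist_le_dist_of_mem hwB
    linarith
end
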